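/- Let X ⊆ R^n be compact convex, d : X → R differentiable and 1-strongly convex w.r.t. a norm ‖·‖, and η > 0. Given losses ℓ^1,…,ℓ^T, define the omniscient FTRL iterates x_o^t := argmin_{x ∈ X} ⟨Σ_{τ≤t} ℓ^τ, x⟩ + (1/η) d(x) for t ≥ 0 (with the empty sum for t = 0). Then for every x̂ ∈ X, Σ_{t=1}^T ⟨ℓ^t, x_o^t − x̂⟩ ≤ (1/η)(d(x̂) − d(x_o^0)) − (1/(2η)) Σ_{t=1}^T ‖x_o^t − x_o^{t−1}‖². -/

import Mathlib

open RealInnerProductSpace Finset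

lemma qg_aux {n : ℕ} {X : Set (EuclideanSpace ℝ (Fin n))} (hXconv : Convex ℝ X)
    {nrm : EuclideanSpace ℝ (Fin n) → ℝ}
    {d : EuclideanSpace ℝ (Fin n) → ℝ}
    {gd : EuclideanSpace ℝ (Fin n) → EuclideanSpace ℝ (Fin n)}
    (hdiff : ∀ x ∈ X, HasGradientAt d (gd x) x)
    (hsc : ∀ x ∈ X, ∀ y ∈ X,
      d y ≥ d x + ⟪gd x, y - x⟫ + (1 / 2) * (nrm (y - x)) ^ 2)
    {η : ℝ} (hη : 0 < η)
    (L : EuclideanSpace ℝ (Fin n)) (xs : EuclideanSpace ℝ (Fin n)) (hxs : xs ∈ X)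
    (hmin : ∀ z ∈ X, ⟪L, xs⟫ + (1 / η) * d xs ≤ ⟪L, z⟫ + (1 / η) * d z)
    (z : EuclideanSpace ℝ (Fin n)) (hz : z ∈ X) :
    ⟪L, xs⟫ + (1 / η) * d xs + (1 / (2 * η)) * (nrm (z - xs)) ^ 2
      ≤ ⟪L, z⟫ + (1 / η) * d z := by
  obtain ⟨v, hv⟩ : ∃ v, v = z - xs := ⟨_, rfl⟩
  have hγ : HasDerivAt (fun t : ℝ => xs + t • v) v 0 := by
    simpa using (((hasDerivAt_id (0 : ℝ)).smul_const v).const_add xs)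
  have hfd : HasFDerivAt d
      ((InnerProductSpace.toDual ℝ (EuclideanSpace ℝ (Fin n))) (gd xs)) (xs + (0:ℝ) • v) := by
    simpa using (hdiff xs hxs).hasFDerivAt
  have hφ : HasDerivAt (fun t : ℝ => d (xs + t • v)) ⟪gd xs, v⟫ 0 := by
    have := hfd.comp_hasDerivAt (0 : ℝ) hγ
    exact this
  -- variational inequality : ⟪gd xs, v⟫ ≥ -η * ⟪L, v⟫
  have hvar : -η * ⟪L, v⟫ ≤ ⟪gd xs, v⟫ := by
    rw [hasDerivAt_iff_tendsto_slope] at hφ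
    have hslope' : Filter.Tendsto (slope (fun t : ℝ => d (xs + t • v)) 0)
        (nhdsWithin 0 (Set.Ioi (0:ℝ))) (nhds ⟪gd xs, v⟫) :=
      hφ.mono_left (nhdsWithin_mono 0 (fun t ht => ne_of_gt ht))
    refine ge_of_tendsto hslope' ?_
    filter_upwards [Ioo_mem_nhdsGT_of_mem (Set.mem_Ico.2 ⟨le_refl (0:ℝ), one_pos⟩)] with t ht'
    have ht0 : (0:ℝ) < t := ht'.1
    have ht1 : t ≤ 1 := le_of_lt ht'.2
    have hmem : xs + t • v ∈ X := by
      have := hXconv hxs hz (by linarith : (0:ℝ) ≤ 1 - t) (le_of_lt ht0) (by ring)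
      convert this using 1
      rw [hv]
      module
    have h1 := hmin _ hmem
    have h2 : ⟪L, xs + t • v⟫ = ⟪L, xs⟫ + t * ⟪L, v⟫ := by
      rw [inner_add_right, real_inner_smul_right]
    rw [h2] at h1
    have h3 : -η * ⟪L, v⟫ * t ≤ d (xs + t • v) - d xs := by
      have h4 : (1/η) * (d xs - d (xs + t • v)) ≤ t * ⟪L, v⟫ := by linarith
      have h5 := mul_le_mul_of_nonneg_left h4 hη.le
      rw [← mul_assoc, mul_one_div, div_self hη.ne', one_mul] at h5
      nlinarith
    rw [slope_def_field]
    simp only [zero_smul, add_zero, sub_zero]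
    rw [le_div_iff₀ ht0]
    linarith
  -- combine with strong convexity
  have hsc2 : d xs + ⟪gd xs, v⟫ + (1/2) * (nrm v) ^ 2 ≤ d z := by
    rw [hv]; exact hsc xs hxs z hz
  have hvz : ⟪L, v⟫ = ⟪L, z⟫ - ⟪L, xs⟫ := by rw [hv, inner_sub_right]
  rw [← hv]
  have hp : (0:ℝ) ≤ 1/η := by positivity
  have i1 := mul_le_mul_of_nonneg_left hvar hp
  have e1 : (1/η) * (-η * ⟪L, v⟫) = -⟪L, v⟫ := by field_simp
  have i2 := mul_le_mul_of_nonneg_left hsc2 hp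
  have e2 : (1/η) * (d xs + ⟪gd xs, v⟫ + (1/2) * (nrm v) ^ 2)
      = (1/η) * d xs + (1/η) * ⟪gd xs, v⟫ + (1/(2*η)) * (nrm v) ^ 2 := by
    field_simp
  rw [e1] at i1
  rw [e2] at i2
  linarith
/-- regret bound for omniscient ("be-the-leader") FTRL:
`Σ_{t=1}^T ⟨ℓ^t, x_o^t − x̂⟩ ≤ (1/η)(d(x̂) − d(x_o^0)) − (1/(2η)) Σ_t ‖x_o^t − x_o^{t−1}‖²`. -/
theorem stmt5 {n : ℕ} (X : Set (EuclideanSpace ℝ (Fin n)))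
    (hXc : IsCompact X) (hXconv : Convex ℝ X)
    (nrm : EuclideanSpace ℝ (Fin n) → ℝ)
    (hn0 : ∀ v, 0 ≤ nrm v)
    (hndef : ∀ v, nrm v = 0 → v = 0)
    (hnsmul : ∀ (c : ℝ) v, nrm (c • v) = |c| * nrm v)
    (hntri : ∀ v w, nrm (v + w) ≤ nrm v + nrm w)
    (d : EuclideanSpace ℝ (Fin n) → ℝ)
    (gd : EuclideanSpace ℝ (Fin n) → EuclideanSpace ℝ (Fin n))
    (hdiff : ∀ x ∈ X, HasGradientAt d (gd x) x)
    (hsc : ∀ x ∈ X, ∀ y ∈ X,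
      d y ≥ d x + ⟪gd x, y - x⟫ + (1 / 2) * (nrm (y - x)) ^ 2)
    (η : ℝ) (hη : 0 < η)
    (T : ℕ) (ℓ : ℕ → EuclideanSpace ℝ (Fin n))
    (xo : ℕ → EuclideanSpace ℝ (Fin n))
    -- `xo t = argmin_{x ∈ X} ⟨Σ_{τ ≤ t} ℓ^τ, x⟩ + (1/η) d(x)` (empty sum for `t = 0`)
    (hxo : ∀ t, xo t ∈ X ∧ ∀ z ∈ X,
      ⟪∑ τ ∈ Icc 1 t, ℓ τ, xo t⟫ + (1 / η) * d (xo t)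
        ≤ ⟪∑ τ ∈ Icc 1 t, ℓ τ, z⟫ + (1 / η) * d z) :
    ∀ xhat ∈ X,
      ∑ t ∈ Icc 1 T, ⟪ℓ t, xo t - xhat⟫
        ≤ (1 / η) * (d xhat - d (xo 0))
          - (1 / (2 * η)) * ∑ t ∈ Icc 1 T, (nrm (xo t - xo (t - 1))) ^ 2 := by
  intro xhat hxhat
  have key : ∀ t : ℕ, ∑ s ∈ Icc 1 t, ⟪ℓ s, xo s⟫
      ≤ (⟪∑ τ ∈ Icc 1 t, ℓ τ, xo t⟫ + (1 / η) * d (xo t)) - (1 / η) * d (xo 0)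
        - (1 / (2 * η)) * ∑ s ∈ Icc 1 t, (nrm (xo s - xo (s - 1))) ^ 2 := by
    intro t
    induction t with
    | zero => simp
    | succ k ih =>
      have hstep := qg_aux hXconv hdiff hsc hη (∑ τ ∈ Icc 1 k, ℓ τ) (xo k) (hxo k).1
        (hxo k).2 (xo (k + 1)) (hxo (k + 1)).1
      have hsum : ∑ τ ∈ Icc 1 (k + 1), ℓ τ = (∑ τ ∈ Icc 1 k, ℓ τ) + ℓ (k + 1) :=
        Finset.sum_Icc_succ_top (by omega) _
      have hin : ⟪∑ τ ∈ Icc 1 (k + 1), ℓ τ, xo (k + 1)⟫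
          = ⟪∑ τ ∈ Icc 1 k, ℓ τ, xo (k + 1)⟫ + ⟪ℓ (k + 1), xo (k + 1)⟫ := by
        rw [hsum, inner_add_left]
      rw [Finset.sum_Icc_succ_top (show 1 ≤ k + 1 by omega) (fun s => ⟪ℓ s, xo s⟫),
        Finset.sum_Icc_succ_top (show 1 ≤ k + 1 by omega)
          (fun s => (nrm (xo s - xo (s - 1))) ^ 2), hsum, inner_add_left]
      simp only [Nat.add_sub_cancel]
      have hdist : (1 / (2 * η)) * ((∑ s ∈ Icc 1 k, (nrm (xo s - xo (s - 1))) ^ 2)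
            + (nrm (xo (k + 1) - xo k)) ^ 2)
          = (1 / (2 * η)) * (∑ s ∈ Icc 1 k, (nrm (xo s - xo (s - 1))) ^ 2)
            + (1 / (2 * η)) * (nrm (xo (k + 1) - xo k)) ^ 2 := mul_add _ _ _
      rw [hdist]
      linarith
  have hfinal := (hxo T).2 xhat hxhat
  have hsub : ∑ t ∈ Icc 1 T, ⟪ℓ t, xo t - xhat⟫
      = (∑ t ∈ Icc 1 T, ⟪ℓ t, xo t⟫) - ⟪∑ τ ∈ Icc 1 T, ℓ τ, xhat⟫ := by
    rw [sum_inner]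
    rw [← Finset.sum_sub_distrib]
    exact Finset.sum_congr rfl fun t _ => inner_sub_right _ _ _
  rw [hsub]
  have := key T
  linarith
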